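/- Let Δ ⊆ ℕ^d be a finite nonempty set and a : Δ → ℝ, and define the tropical polynomial function P : ℝ^d → ℝ by P(x) = min_{I ∈ Δ}(a_I + ⟨I,x⟩). Let V ⊆ Δ be the set of Newton-diagram points of Δ, i.e. V = { I ∈ Δ : there exists w ∈ ℝ^d with all coordinates strictly positive such that ⟨w,I⟩ ≤ ⟨w,J⟩ for every J ∈ Δ }. Then there exists M ∈ ℝ such that for every x ∈ ℝ^d with x_j ≥ M for all j, one has P(x) = min_{I ∈ V}(a_I + ⟨I,x⟩). (Every convergent tropical power series coincides with its normal form, given by the monomials on its Newton diagram, in a neighborhood of ∞.) -/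

import Mathlib

/-- `I` is a Newton-diagram point of the finite set `Δ ⊆ ℕ^d` (together with `I ∈ Δ`) if there
is a strictly positive weight vector `w` for which `I` minimizes `⟨w,·⟩` over `Δ`. These are the
points of `Δ` on the compact faces of the Newton polyhedron. -/
def IsNewtonDiagramPoint {d : ℕ} (Δ : Finset (Fin d → ℕ)) (I : Fin d → ℕ) : Prop :=
  ∃ w : Fin d → ℝ, (∀ j, 0 < w j) ∧
    ∀ J ∈ Δ, ∑ j, w j * (I j : ℝ) ≤ ∑ j, w j * (J j : ℝ)


open Finset

section FarkasTools

variable {E : Type*} [NormedAddCommGroup E] [NormedSpace ℝ E]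

/-- The linear map sending coefficients to the corresponding linear combination. -/
private def comboMap {ι : Type*} [Fintype ι] (v : ι → E) : (ι → ℝ) →ₗ[ℝ] E where
  toFun c := ∑ i, c i • v i
  map_add' c₁ c₂ := by simp [add_smul, Finset.sum_add_distrib]
  map_smul' t c := by simp [mul_smul, Finset.smul_sum]

private lemma comboMap_apply {ι : Type*} [Fintype ι] (v : ι → E) (c : ι → ℝ) :
    comboMap v c = ∑ i, c i • v i := rfl

/-- Conic Carathéodory: a nonnegative combination can be rewritten as a nonnegative
combination supported on a linearly independent subfamily. -/
private lemma cara_aux {ι : Type*} [Fintype ι] (v : ι → E) :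
    ∀ (N : ℕ) (c : ι → ℝ), ((univ.filter fun i => c i ≠ 0).card ≤ N) → (∀ i, 0 ≤ c i) →
    ∃ (s : Finset ι) (c' : ι → ℝ), LinearIndependent ℝ (fun i : s => v i) ∧
      (∀ i, 0 ≤ c' i) ∧ (∀ i ∉ s, c' i = 0) ∧ ∑ i, c' i • v i = ∑ i, c i • v i := by
  classical
  intro N
  induction N with
  | zero =>
    intro c hcard hc
    have hzero : ∀ i, c i = 0 := by
      intro i
      by_contra h
      have : i ∈ univ.filter fun i => c i ≠ 0 := mem_filter.2 ⟨mem_univ i, h⟩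
      have := Finset.card_pos.2 ⟨i, this⟩
      omega
    have : IsEmpty ((∅ : Finset ι) : Type _) := by
      simp [Finset.isEmpty_coe_sort]
      exact ⟨fun x => x.2⟩
    exact ⟨∅, c, linearIndependent_empty_type, hc, fun i _ => hzero i, rfl⟩
  | succ N ih =>
    intro c hcard hc
    set s : Finset ι := univ.filter fun i => c i ≠ 0 with hs
    have hcs : ∀ i ∉ s, c i = 0 := fun i hi =>
      not_not.1 fun h => hi (mem_filter.2 ⟨mem_univ i, h⟩)
    by_cases hind : LinearIndependent ℝ (fun i : s => v i)
    · exact ⟨s, c, hind, hc, hcs, rfl⟩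
    · obtain ⟨g, hg0, i₁, hi₁⟩ := Fintype.not_linearIndependent_iff.1 hind
      -- extend g to ι, possibly negated so that some coordinate is positive
      have hmk : ∀ g : {x // x ∈ s} → ℝ, (∑ i : s, g i • v i = 0) →
          ∃ G : ι → ℝ, (∀ i ∉ s, G i = 0) ∧ (∑ i, G i • v i = 0) ∧
            (∀ i : s, G ↑i = g i) := by
        intro g hg
        refine ⟨fun i => if h : i ∈ s then g ⟨i, h⟩ else 0, fun i hi => dif_neg hi, ?_,
          fun i => dif_pos i.2⟩
        have h1 : ∑ i, (if h : i ∈ s then g ⟨i, h⟩ else 0) • v i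
            = ∑ i ∈ s, (if h : i ∈ s then g ⟨i, h⟩ else 0) • v i :=
          (Finset.sum_subset (Finset.subset_univ s)
            (fun i _ hi => by rw [dif_neg hi, zero_smul])).symm
        have h2 : ∑ i ∈ s, (if h : i ∈ s then g ⟨i, h⟩ else 0) • v i
            = ∑ i ∈ s.attach, (if h : (i : ι) ∈ s then g ⟨i, h⟩ else 0) • v i :=
          (Finset.sum_attach s _).symm
        rw [h1, h2, ← hg, ← Finset.univ_eq_attach]
        refine Finset.sum_congr rfl fun i _ => ?_
        rw [dif_pos i.2]
      -- choose sign so some coefficient is positive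
      obtain ⟨G, hGsupp, hGsum, hGpos⟩ :
          ∃ G : ι → ℝ, (∀ i ∉ s, G i = 0) ∧ (∑ i, G i • v i = 0) ∧ ∃ i ∈ s, 0 < G i := by
        obtain ⟨G, h1, h2, h3⟩ := hmk g hg0
        rcases lt_or_gt_of_ne hi₁ with hneg | hpos
        · obtain ⟨G', h1', h2', h3'⟩ := hmk (-g) (by
            rw [← neg_zero, ← hg0, ← Finset.sum_neg_distrib]
            exact Finset.sum_congr rfl fun i _ => by rw [Pi.neg_apply, neg_smul])
          exact ⟨G', h1', h2', ⟨↑i₁, i₁.2, by rw [h3']; simpa using hneg⟩⟩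
        · exact ⟨G, h1, h2, ⟨↑i₁, i₁.2, by rw [h3]; exact hpos⟩⟩
      obtain ⟨i₀, hi₀mem, hi₀min⟩ := Finset.exists_min_image
        (s.filter fun i => 0 < G i) (fun i => c i / G i)
        (by obtain ⟨i, his, hip⟩ := hGpos; exact ⟨i, mem_filter.2 ⟨his, hip⟩⟩)
      have hi₀s : i₀ ∈ s := (mem_filter.1 hi₀mem).1
      have hGi₀ : 0 < G i₀ := (mem_filter.1 hi₀mem).2
      have hci₀ : 0 < c i₀ := by
        rcases (hc i₀).lt_or_eq with h | h
        · exact h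
        · exact absurd h.symm ((mem_filter.1 hi₀s).2)
      set t : ℝ := c i₀ / G i₀ with ht
      have ht0 : 0 < t := div_pos hci₀ hGi₀
      set c₂ : ι → ℝ := fun i => c i - t * G i with hc₂
      have hc₂0 : ∀ i, 0 ≤ c₂ i := by
        intro i
        by_cases hgi : 0 < G i
        · have his : i ∈ s := by
            by_contra h
            rw [hGsupp i h] at hgi; exact lt_irrefl 0 hgi
          have hle : t ≤ c i / G i := hi₀min i (mem_filter.2 ⟨his, hgi⟩)
          have := mul_le_mul_of_nonneg_right hle hgi.le
          rw [div_mul_cancel₀ _ (ne_of_gt hgi)] at this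
          simp only [hc₂]
          linarith
        · have h1 : G i ≤ 0 := not_lt.1 hgi
          have h2 : t * G i ≤ 0 := mul_nonpos_of_nonneg_of_nonpos ht0.le h1
          simp only [hc₂]
          have := hc i
          linarith
      have hc₂i₀ : c₂ i₀ = 0 := by
        simp only [hc₂, ht]
        rw [div_mul_cancel₀ _ (ne_of_gt hGi₀), sub_self]
      have hsupp₂ : (univ.filter fun i => c₂ i ≠ 0) ⊆ s.erase i₀ := by
        intro i hi
        have hne : c₂ i ≠ 0 := (mem_filter.1 hi).2
        have his : i ∈ s := by
          by_contra h
          exact hne (by simp only [hc₂]; rw [hGsupp i h, hcs i h, mul_zero, sub_zero])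
        exact Finset.mem_erase.2 ⟨fun h => hne (h ▸ hc₂i₀), his⟩
      have hcard₂ : (univ.filter fun i => c₂ i ≠ 0).card ≤ N := by
        have h1 := Finset.card_le_card hsupp₂
        have h2 : (s.erase i₀).card < s.card := Finset.card_erase_lt_of_mem hi₀s
        omega
      obtain ⟨s', c', hind', h0', hoff', hsum'⟩ := ih c₂ hcard₂ hc₂0
      refine ⟨s', c', hind', h0', hoff', ?_⟩
      rw [hsum']
      have : ∑ i, c₂ i • v i = ∑ i, c i • v i - t • ∑ i, G i • v i := by
        rw [Finset.smul_sum, ← Finset.sum_sub_distrib]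
        refine Finset.sum_congr rfl fun i _ => ?_
        simp only [hc₂]
        rw [sub_smul, mul_smul]
      rw [this, hGsum, smul_zero, sub_zero]

private lemma isClosed_cone {E : Type*} [NormedAddCommGroup E] [NormedSpace ℝ E]
    [FiniteDimensional ℝ E] {ι : Type*} [Fintype ι] (v : ι → E) :
    IsClosed {x : E | ∃ c : ι → ℝ, (∀ i, 0 ≤ c i) ∧ ∑ i, c i • v i = x} := by
  classical
  have main : {x : E | ∃ c : ι → ℝ, (∀ i, 0 ≤ c i) ∧ ∑ i, c i • v i = x} =
      ⋃ s ∈ {s : Finset ι | LinearIndependent ℝ (fun i : s => v i)},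
        {x : E | ∃ c : ι → ℝ, (∀ i, 0 ≤ c i) ∧ (∀ i ∉ s, c i = 0) ∧ ∑ i, c i • v i = x} := by
    ext x
    simp only [Set.mem_iUnion, Set.mem_setOf_eq]
    constructor
    · rintro ⟨c, hc, rfl⟩
      obtain ⟨s, c', hind, h0, hoff, hsum⟩ := cara_aux v _ c le_rfl hc
      exact ⟨s, hind, c', h0, hoff, hsum⟩
    · rintro ⟨s, _, c, hc, _, rfl⟩
      exact ⟨c, hc, rfl⟩
  rw [main]
  refine Set.Finite.isClosed_biUnion (Set.toFinite _) ?_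
  intro s hs
  have himg : {x : E | ∃ c : ι → ℝ, (∀ i, 0 ≤ c i) ∧ (∀ i ∉ s, c i = 0) ∧ ∑ i, c i • v i = x}
      = (comboMap (fun i : {x // x ∈ s} => v i)) '' {c : {x // x ∈ s} → ℝ | ∀ i, 0 ≤ c i} := by
    ext x
    constructor
    · rintro ⟨c, hc, hoff, rfl⟩
      refine ⟨fun i => c i, fun i => hc i, ?_⟩
      rw [comboMap_apply]
      rw [Finset.univ_eq_attach, Finset.sum_attach s (fun i => c i • v i)]
      exact Finset.sum_subset (Finset.subset_univ s)
        (fun i _ hi => by rw [hoff i hi, zero_smul])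
    · rintro ⟨c, hc, rfl⟩
      refine ⟨fun i => if h : i ∈ s then c ⟨i, h⟩ else 0,
        fun i => by
          by_cases h : i ∈ s
          · simp only [dif_pos h]; exact hc ⟨i, h⟩
          · simp only [dif_neg h]; exact le_refl 0, fun i hi => dif_neg hi, ?_⟩
      rw [comboMap_apply]
      have h1 : ∑ i : ι, (if h : i ∈ s then c ⟨i, h⟩ else 0) • v i
          = ∑ i ∈ s, (if h : i ∈ s then c ⟨i, h⟩ else 0) • v i :=
        (Finset.sum_subset (Finset.subset_univ s)
          (fun i _ hi => by rw [dif_neg hi, zero_smul])).symm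
      rw [h1, ← Finset.sum_attach s (fun i => (if h : i ∈ s then c ⟨i, h⟩ else 0) • v i),
        ← Finset.univ_eq_attach]
      exact Finset.sum_congr rfl fun i _ => by rw [dif_pos i.2]
  rw [himg]
  have hker : LinearMap.ker (comboMap (fun i : {x // x ∈ s} => v i)) = ⊥ := by
    rw [LinearMap.ker_eq_bot']
    intro c hcz
    have := Fintype.linearIndependent_iff.1 hs c hcz
    funext i
    exact this i
  have hemb := LinearMap.isClosedEmbedding_of_injective hker
  refine hemb.isClosedMap _ ?_
  have : {c : {x // x ∈ s} → ℝ | ∀ i, 0 ≤ c i} = ⋂ i, {c | 0 ≤ c i} := by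
    ext c; simp [Set.mem_iInter]
  rw [this]
  exact isClosed_iInter fun i => isClosed_le continuous_const (continuous_apply i)

private lemma farkas_sep {E : Type*} [NormedAddCommGroup E] [NormedSpace ℝ E]
    [FiniteDimensional ℝ E] {ι : Type*} [Fintype ι] (v : ι → E) (b : E)
    (hb : ¬ ∃ c : ι → ℝ, (∀ i, 0 ≤ c i) ∧ ∑ i, c i • v i = b) :
    ∃ f : E →L[ℝ] ℝ, (∀ i, f (v i) ≤ 0) ∧ 0 < f b := by
  classical
  set C := {x : E | ∃ c : ι → ℝ, (∀ i, 0 ≤ c i) ∧ ∑ i, c i • v i = x} with hC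
  have hconv : Convex ℝ C := by
    rintro x ⟨cx, hcx, rfl⟩ y ⟨cy, hcy, rfl⟩ p q hp hq hpq
    refine ⟨fun i => p * cx i + q * cy i,
      fun i => add_nonneg (mul_nonneg hp (hcx i)) (mul_nonneg hq (hcy i)), ?_⟩
    rw [Finset.smul_sum, Finset.smul_sum, ← Finset.sum_add_distrib]
    refine Finset.sum_congr rfl fun i _ => ?_
    rw [add_smul, mul_smul, mul_smul]
  have hbC : b ∉ C := hb
  obtain ⟨f, u, hfC, hub⟩ := geometric_hahn_banach_closed_point hconv (isClosed_cone v) hbC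
  have h0C : (0 : E) ∈ C := ⟨0, fun i => le_refl 0, by simp⟩
  have hu : 0 < u := by simpa using hfC 0 h0C
  refine ⟨f, ?_, lt_trans hu hub⟩
  intro i
  by_contra hcon
  push_neg at hcon
  have hmem : ∀ t : ℝ, 0 ≤ t → t • v i ∈ C := by
    intro t ht
    refine ⟨fun k => if k = i then t else 0, fun k => by by_cases h : k = i <;> simp [h, ht], ?_⟩
    simp [ite_smul, Finset.sum_ite_eq']
  have hkey := hfC (((u + 1) / f (v i)) • v i) (hmem _ (by positivity))
  rw [map_smul, smul_eq_mul, div_mul_cancel₀ _ (ne_of_gt hcon)] at hkey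
  linarith

/-- If `I ∈ Δ` is not a Newton-diagram point, there is a convex combination of points of `Δ`
lying coordinatewise below `I`, with a positive total deficiency. -/
private lemma exists_convex_certificate {d : ℕ} (Δ : Finset (Fin d → ℕ)) (I : Fin d → ℕ)
    (hI : I ∈ Δ) (hnot : ¬ IsNewtonDiagramPoint Δ I) :
    ∃ (Λ : (Fin d → ℕ) → ℝ) (ν : Fin d → ℝ),
      (∀ J, 0 ≤ Λ J) ∧ (∑ J ∈ Δ, Λ J = 1) ∧ (∀ j, 0 ≤ ν j) ∧ (0 < ∑ j, ν j) ∧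
      (∀ j, ∑ J ∈ Δ, Λ J * (J j : ℝ) + ν j = (I j : ℝ)) := by
  classical
  set v : ({J // J ∈ Δ} ⊕ Fin d) → (Fin d → ℝ) × ℝ := Sum.elim
      (fun J => ((fun j => ((J : Fin d → ℕ) j : ℝ) - (I j : ℝ)), (0 : ℝ)))
      (fun j => ((Pi.single j (1 : ℝ)), (-1 : ℝ))) with hv
  set b : (Fin d → ℝ) × ℝ := (0, -1) with hb
  by_cases hcase : ∃ c : ({J // J ∈ Δ} ⊕ Fin d) → ℝ, (∀ i, 0 ≤ c i) ∧ ∑ i, c i • v i = b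
  · obtain ⟨c, hc0, hsum⟩ := hcase
    rw [Fintype.sum_sum_type] at hsum
    -- second components
    have hsnd := congrArg Prod.snd hsum
    simp only [Prod.snd_add, Prod.snd_sum, Prod.smul_snd, hv, Sum.elim_inl, Sum.elim_inr,
      smul_eq_mul, mul_zero, Finset.sum_const_zero, zero_add, mul_neg, mul_one, hb] at hsnd
    rw [Finset.sum_neg_distrib, neg_inj] at hsnd
    -- hsnd : ∑ j, c (Sum.inr j) = 1
    -- first components, evaluated at a coordinate k
    have hsingle : ∀ k : Fin d, (∑ j, c (Sum.inr j) * ((Pi.single j (1:ℝ) : Fin d → ℝ) k))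
        = c (Sum.inr k) := by
      intro k
      have hterm : ∀ j, c (Sum.inr j) * ((Pi.single j (1:ℝ) : Fin d → ℝ) k)
          = if k = j then c (Sum.inr j) else 0 := by
        intro j
        rw [Pi.single_apply, mul_ite, mul_one, mul_zero]
      rw [Finset.sum_congr rfl fun j _ => hterm j, Finset.sum_ite_eq]
      simp
    have hfst : ∀ k, ∑ J : {J // J ∈ Δ}, c (Sum.inl J) * (((J : Fin d → ℕ) k : ℝ) - (I k : ℝ))
        + c (Sum.inr k) = 0 := by
      intro k
      have h := congrArg (fun z : (Fin d → ℝ) × ℝ => z.1 k) hsum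
      simp only [Prod.fst_add, Prod.fst_sum, Prod.smul_fst, hv, Sum.elim_inl, Sum.elim_inr,
        hb, Pi.add_apply, Finset.sum_apply, Pi.smul_apply, smul_eq_mul, Pi.zero_apply] at h
      rw [hsingle k] at h
      exact h
    set S : ℝ := ∑ J : {J // J ∈ Δ}, c (Sum.inl J) with hS
    have hS0 : 0 ≤ S := Finset.sum_nonneg fun J _ => hc0 _
    have hSpos : 0 < S := by
      rcases hS0.lt_or_eq with h | h
      · exact h
      · exfalso
        have hall : ∀ J : {J // J ∈ Δ}, c (Sum.inl J) = 0 := fun J =>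
          (Finset.sum_eq_zero_iff_of_nonneg (fun J _ => hc0 (Sum.inl J))).1 h.symm J
            (Finset.mem_univ J)
        have hν0 : ∀ k, c (Sum.inr k) = 0 := by
          intro k
          have := hfst k
          rw [Finset.sum_eq_zero (fun J _ => by rw [hall J, zero_mul])] at this
          linarith
        rw [Finset.sum_congr rfl fun j _ => hν0 j, Finset.sum_const_zero] at hsnd
        exact one_ne_zero hsnd.symm
    -- transfer sums over the subtype to sums over Δ
    have htrans : ∀ φ : (Fin d → ℕ) → ℝ,
        ∑ J ∈ Δ, (if h : J ∈ Δ then c (Sum.inl ⟨J, h⟩) else 0) * φ J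
          = ∑ J : {J // J ∈ Δ}, c (Sum.inl J) * φ J := by
      intro φ
      rw [← Finset.sum_attach Δ (fun J => (if h : J ∈ Δ then c (Sum.inl ⟨J, h⟩) else 0) * φ J),
        ← Finset.univ_eq_attach]
      exact Finset.sum_congr rfl fun J _ => by rw [dif_pos J.2]
    refine ⟨fun J => (if h : J ∈ Δ then c (Sum.inl ⟨J, h⟩) else 0) / S,
      fun j => c (Sum.inr j) / S, ?_, ?_, ?_, ?_, ?_⟩
    · intro J
      refine div_nonneg ?_ hS0
      by_cases h : J ∈ Δ
      · simp only [dif_pos h]; exact hc0 _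
      · simp only [dif_neg h]; exact le_refl 0
    · rw [← Finset.sum_div]
      rw [show ∑ J ∈ Δ, (if h : J ∈ Δ then c (Sum.inl ⟨J, h⟩) else 0) = S by
        have := htrans (fun _ => 1); simpa [hS, Finset.univ_eq_attach] using this]
      exact div_self (ne_of_gt hSpos)
    · intro j
      exact div_nonneg (hc0 _) hS0
    · rw [← Finset.sum_div]
      exact div_pos (by rw [hsnd]; exact one_pos) hSpos
    · intro k
      have h1 : ∑ J ∈ Δ, (if h : J ∈ Δ then c (Sum.inl ⟨J, h⟩) else 0) / S * ((J k : ℝ))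
          = (∑ J ∈ Δ, (if h : J ∈ Δ then c (Sum.inl ⟨J, h⟩) else 0) * ((J k : ℝ))) / S := by
        rw [Finset.sum_div]
        exact Finset.sum_congr rfl fun J _ => by ring
      rw [h1, htrans (fun J => ((J k : ℕ) : ℝ)), ← add_div]
      have h2 : ∑ J : {J // J ∈ Δ}, c (Sum.inl J) * (((J : Fin d → ℕ) k : ℕ) : ℝ)
          + c (Sum.inr k) = S * (I k : ℝ) := by
        have h3 := hfst k
        have hexp : ∑ J : {J // J ∈ Δ}, c (Sum.inl J) * (((J : Fin d → ℕ) k : ℝ) - (I k : ℝ))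
            = ∑ J : {J // J ∈ Δ}, c (Sum.inl J) * (((J : Fin d → ℕ) k : ℕ) : ℝ)
              - S * (I k : ℝ) := by
          rw [hS, Finset.sum_mul, ← Finset.sum_sub_distrib]
          exact Finset.sum_congr rfl fun J _ => by ring
        rw [hexp] at h3
        linarith
      rw [h2, mul_comm, mul_div_assoc, div_self (ne_of_gt hSpos), mul_one]
  · exfalso
    apply hnot
    obtain ⟨f, hf, hfb⟩ := farkas_sep v b hcase
    have hlin : ∀ y : Fin d → ℝ, f (y, 0) = ∑ j, y j * f ((Pi.single j (1:ℝ)), 0) := by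
      intro y
      have h1 : y = ∑ j, y j • ((Pi.single j (1:ℝ)) : Fin d → ℝ) := by
        funext k
        rw [Finset.sum_apply]
        have hterm : ∀ j, (y j • ((Pi.single j (1:ℝ)) : Fin d → ℝ)) k = if k = j then y j else 0 := by
          intro j
          rw [Pi.smul_apply, Pi.single_apply, smul_eq_mul, mul_ite, mul_one, mul_zero]
        rw [Finset.sum_congr rfl fun j _ => hterm j, Finset.sum_ite_eq]
        simp
      have hy : ((y, (0:ℝ)) : (Fin d → ℝ) × ℝ)
          = ∑ j, y j • (((Pi.single j (1:ℝ)) : Fin d → ℝ), (0:ℝ)) := by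
        rw [Prod.ext_iff]
        constructor
        · rw [Prod.fst_sum]
          simpa using h1
        · rw [Prod.snd_sum]
          simp
      rw [hy, map_sum]
      exact Finset.sum_congr rfl fun j _ => by rw [map_smul, smul_eq_mul]
    set w : Fin d → ℝ := fun j => -f ((Pi.single j (1:ℝ)), 0) with hw
    have hwpos : ∀ j, 0 < w j := by
      intro j
      have h1 := hf (Sum.inr j)
      have h2 : ((Pi.single j (1:ℝ) : Fin d → ℝ), (-1:ℝ))
          = ((Pi.single j (1:ℝ) : Fin d → ℝ), (0:ℝ)) + b := by
        rw [hb, Prod.ext_iff]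
        constructor
        · simp
        · simp
      rw [hv] at h1
      simp only [Sum.elim_inr] at h1
      rw [h2, map_add] at h1
      simp only [hw]
      linarith
    refine ⟨w, hwpos, ?_⟩
    intro J hJ
    have h1 := hf (Sum.inl ⟨J, hJ⟩)
    rw [hv] at h1
    simp only [Sum.elim_inl] at h1
    rw [hlin] at h1
    have h2 : ∑ j, (((J j : ℝ)) - (I j : ℝ)) * f ((Pi.single j (1:ℝ)), 0)
        = ∑ j, w j * (I j : ℝ) - ∑ j, w j * (J j : ℝ) := by
      rw [← Finset.sum_sub_distrib]
      exact Finset.sum_congr rfl fun j _ => by simp only [hw]; ring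
    rw [h2] at h1
    linarith

end FarkasTools

/-- A tropical polynomial function `P(x) = min_{I∈Δ}(a_I + ⟨I,x⟩)` coincides,
on the region where all coordinates are large enough, with the minimum taken only over the
Newton-diagram points of `Δ`. -/
theorem tropical_polynomial_normal_form {d : ℕ}
    (Δ : Finset (Fin d → ℕ)) (hΔ : Δ.Nonempty) (a : (Fin d → ℕ) → ℝ)
    (P : (Fin d → ℝ) → ℝ)
    (hP : ∀ x, P x = Δ.inf' hΔ fun I => a I + ∑ j, (I j : ℝ) * x j)
    (V : Finset (Fin d → ℕ))
    (hV : ∀ I, I ∈ V ↔ I ∈ Δ ∧ IsNewtonDiagramPoint Δ I) :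
    ∃ hV' : V.Nonempty, ∃ M : ℝ, ∀ x : Fin d → ℝ, (∀ j, M ≤ x j) →
      P x = V.inf' hV' fun I => a I + ∑ j, (I j : ℝ) * x j := by
  classical
  -- V is nonempty: a minimizer of the total degree is a Newton-diagram point (weight 1)
  have hV'ne : V.Nonempty := by
    obtain ⟨I₀, hI₀, hmin⟩ := Δ.exists_min_image (fun I => ∑ j, I j) hΔ
    refine ⟨I₀, (hV I₀).2 ⟨hI₀, fun _ => 1, fun _ => one_pos, fun J hJ => ?_⟩⟩
    simp only [one_mul]
    have h := hmin J hJ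
    have h1 : ((∑ j, I₀ j : ℕ) : ℝ) ≤ ((∑ j, J j : ℕ) : ℝ) := Nat.cast_le.2 h
    push_cast at h1
    exact h1
  -- key: for each non-Newton point, the inf is strictly below its value, for large x
  have key : ∀ I ∈ Δ, I ∉ V → ∃ MI : ℝ, ∀ x : Fin d → ℝ, (∀ j, MI ≤ x j) →
      (Δ.inf' hΔ fun K => a K + ∑ j, (K j : ℝ) * x j) < a I + ∑ j, (I j : ℝ) * x j := by
    intro I hIΔ hIV
    have hnot : ¬ IsNewtonDiagramPoint Δ I := fun h => hIV ((hV I).2 ⟨hIΔ, h⟩)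
    obtain ⟨Λ, ν, hΛ0, hΛ1, hν0, hνpos, hid⟩ := exists_convex_certificate Δ I hIΔ hnot
    set δ : ℝ := ∑ j, ν j with hδ
    refine ⟨max 0 ((∑ J ∈ Δ, Λ J * a J - a I + 1) / δ), ?_⟩
    intro x hx
    set Mx : ℝ := max 0 ((∑ J ∈ Δ, Λ J * a J - a I + 1) / δ) with hMx
    -- inf is at most the Λ-average
    have hinf : (Δ.inf' hΔ fun K => a K + ∑ j, (K j : ℝ) * x j)
        ≤ ∑ J ∈ Δ, Λ J * (a J + ∑ j, (J j : ℝ) * x j) := by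
      have h1 : ∑ J ∈ Δ, Λ J * (Δ.inf' hΔ fun K => a K + ∑ j, (K j : ℝ) * x j)
          ≤ ∑ J ∈ Δ, Λ J * (a J + ∑ j, (J j : ℝ) * x j) :=
        Finset.sum_le_sum fun J hJ =>
          mul_le_mul_of_nonneg_left (Finset.inf'_le _ hJ) (hΛ0 J)
      rwa [← Finset.sum_mul, hΛ1, one_mul] at h1
    -- compute the Λ-average
    have havg : ∑ J ∈ Δ, Λ J * (a J + ∑ j, (J j : ℝ) * x j)
        = ∑ J ∈ Δ, Λ J * a J + ∑ j, ((I j : ℝ) - ν j) * x j := by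
      have h1 : ∀ J, Λ J * (a J + ∑ j, (J j : ℝ) * x j)
          = Λ J * a J + ∑ j, Λ J * (J j : ℝ) * x j := by
        intro J
        rw [mul_add, Finset.mul_sum]
        congr 1
        exact Finset.sum_congr rfl fun j _ => by ring
      rw [Finset.sum_congr rfl fun J _ => h1 J, Finset.sum_add_distrib]
      congr 1
      rw [Finset.sum_comm]
      exact Finset.sum_congr rfl fun j _ => by
        rw [← Finset.sum_mul]
        have := hid j
        have h2 : ∑ J ∈ Δ, Λ J * (J j : ℝ) = (I j : ℝ) - ν j := by linarith
        rw [h2]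
    -- lower bound for the ν-part
    have hνx : δ * Mx ≤ ∑ j, ν j * x j := by
      have h1 : ∀ j, ν j * Mx ≤ ν j * x j := fun j =>
        mul_le_mul_of_nonneg_left (hx j) (hν0 j)
      have h2 : ∑ j, ν j * Mx ≤ ∑ j, ν j * x j := Finset.sum_le_sum fun j _ => h1 j
      rwa [← Finset.sum_mul] at h2
    have hδM : ∑ J ∈ Δ, Λ J * a J - a I + 1 ≤ δ * Mx := by
      have h1 : (∑ J ∈ Δ, Λ J * a J - a I + 1) / δ ≤ Mx := le_max_right _ _
      have h2 := mul_le_mul_of_nonneg_left h1 (le_of_lt hνpos)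
      rwa [mul_div_cancel₀ _ (ne_of_gt hνpos)] at h2
    have hsplit : ∑ j, ((I j : ℝ) - ν j) * x j = ∑ j, (I j : ℝ) * x j - ∑ j, ν j * x j := by
      rw [← Finset.sum_sub_distrib]
      exact Finset.sum_congr rfl fun j _ => by ring
    calc (Δ.inf' hΔ fun K => a K + ∑ j, (K j : ℝ) * x j)
        ≤ ∑ J ∈ Δ, Λ J * (a J + ∑ j, (J j : ℝ) * x j) := hinf
      _ = ∑ J ∈ Δ, Λ J * a J + ∑ j, ((I j : ℝ) - ν j) * x j := havg
      _ < a I + ∑ j, (I j : ℝ) * x j := by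
          rw [hsplit]
          have := le_trans hδM hνx
          linarith
  -- choose the thresholds
  have choice : ∀ I : Fin d → ℕ, ∃ MI : ℝ, I ∈ Δ → I ∉ V → ∀ x : Fin d → ℝ,
      (∀ j, MI ≤ x j) →
      (Δ.inf' hΔ fun K => a K + ∑ j, (K j : ℝ) * x j) < a I + ∑ j, (I j : ℝ) * x j := by
    intro I
    by_cases h : I ∈ Δ ∧ I ∉ V
    · obtain ⟨MI, hMI⟩ := key I h.1 h.2
      exact ⟨MI, fun _ _ => hMI⟩
    · exact ⟨0, fun h1 h2 => absurd ⟨h1, h2⟩ h⟩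
  choose MI hMI using choice
  refine ⟨hV'ne, Δ.sup' hΔ MI, ?_⟩
  intro x hx
  rw [hP]
  apply le_antisymm
  · exact Finset.le_inf' _ _ fun J hJV => Finset.inf'_le _ ((hV J).1 hJV).1
  · obtain ⟨I₀, hI₀, hEq⟩ := Finset.exists_mem_eq_inf' hΔ
      (fun K => a K + ∑ j, (K j : ℝ) * x j)
    by_cases hI₀V : I₀ ∈ V
    · rw [hEq]
      exact Finset.inf'_le _ hI₀V
    · exfalso
      have h1 := hMI I₀ hI₀ hI₀V x
        (fun j => le_trans (Finset.le_sup' MI hI₀) (hx j))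
      rw [← hEq] at h1
      exact lt_irrefl _ h1
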